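/- Let B ⊂ F be nonempty subsets of E with F ≠ E, and set G = (F∖B) ∪ {𝔡}. Then the trace on G of the chain collapsed at B has the same jump rates as the collapse at B of the trace on F: R_{TC}(u,v) = R_{CT}(u,v) for all u ≠ v in G. In particular, for every η ∈ F∖B, R_{TC}(𝔡, η) = μ(B)^{-1} Σ_{ζ∈B} μ(ζ) λ(ζ) P_ζ[ℍ⁺_F < ∞ and Y_{ℍ⁺_F} = η] = R_{CT}(𝔡, η); hence the two processes have the same law. -/

import Mathlib

open scoped Classical
open Filter Topology

noncomputable section

/-- The weight of the discrete-time path `γ` (consisting of `n` steps) under the transition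
kernel `p`: the probability that the chain started at `γ 0` follows exactly this path. -/
def pathWeight {E : Type*} (p : E → E → ℝ) {n : ℕ} (γ : Fin (n + 1) → E) : ℝ :=
  ∏ i : Fin n, p (γ i.castSucc) (γ i.succ)

/-- `retProb p η S T` is the probability that the chain with transition kernel `p` started at
`η` enters the set `S` at some positive time, and does so for the first time at a state
belonging to `T`.  For `T ⊆ S` this is `P_η[ℍ⁺_S < ∞ and Y_{ℍ⁺_S} ∈ T]`; for disjoint sets
`A`, `B`, taking `S = A ∪ B`, `T = B` gives `P_η[ℍ⁺_B < ℍ⁺_A]`.  It is written as a sum over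
all finite paths. -/
def retProb {E : Type*} (p : E → E → ℝ) (η : E) (S T : Set E) : ℝ :=
  ∑' x : Σ n : ℕ, Fin (n + 2) → E,
    if x.2 0 = η ∧ (∀ j : Fin (x.1 + 2), 0 < (j : ℕ) → (j : ℕ) < x.1 + 1 → x.2 j ∉ S) ∧
        x.2 (Fin.last (x.1 + 1)) ∈ T
      then pathWeight p x.2 else 0

/-- `hitProb p η A B = P_η[ℍ_A < ℍ_B]`: the probability that the chain with kernel `p`
started at `η` hits `A` (a hit at time `0` being allowed) strictly before hitting `B`,
written as a sum over all finite paths which stay outside `A ∪ B` before ending in `A`. -/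
def hitProb {E : Type*} (p : E → E → ℝ) (η : E) (A B : Set E) : ℝ :=
  ∑' x : Σ n : ℕ, Fin (n + 1) → E,
    if x.2 0 = η ∧ (∀ j : Fin (x.1 + 1), (j : ℕ) < x.1 → x.2 j ∉ A ∪ B) ∧
        x.2 (Fin.last x.1) ∈ A
      then pathWeight p x.2 else 0

/-- The capacity `Cap(A,B) = Σ_{η ∈ A} M(η) P_η[ℍ⁺_B < ℍ⁺_A]` between two disjoint sets,
for the chain with jump kernel `p` and invariant measure `M` of the jump chain. -/
def cap {E : Type*} (p : E → E → ℝ) (M : E → ℝ) (A B : Set E) : ℝ :=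
  ∑' η : A, M η.1 * retProb p η.1 (A ∪ B) B

/-- The jump probabilities `p(η,ξ) = R(η,ξ)/λ(η)`, `λ(η) = -R(η,η)`, of a rate matrix `R`. -/
def jumpProb {E : Type*} (R : E → E → ℝ) (η ξ : E) : ℝ :=
  if η = ξ then 0 else R η ξ / (-R η η)

/-- Irreducibility of a discrete-time chain: any two states are joined by a path of
positive probability. -/
def MCIrreducible {E : Type*} (p : E → E → ℝ) : Prop :=
  ∀ η ξ : E, ∃ (n : ℕ) (γ : Fin (n + 1) → E),
    γ 0 = η ∧ γ (Fin.last n) = ξ ∧ 0 < pathWeight p γ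

/-- `R` is a rate matrix: nonnegative off-diagonal entries, finite strictly positive holding
rates `λ(η) = -R(η,η)`, and rows summing to zero. -/
structure IsRateMatrix {E : Type*} (R : E → E → ℝ) : Prop where
  offdiag_nonneg : ∀ η ξ, η ≠ ξ → 0 ≤ R η ξ
  diag_neg : ∀ η, R η η < 0
  row_summable : ∀ η, Summable (R η)
  row_sum : ∀ η, ∑' ξ, R η ξ = 0

/-- `μ` is a stationary probability measure for the rate matrix `R`, charging every point,
with summable holding rates:  `Σ_η λ(η) μ(η) < ∞`. -/
structure IsStationaryRate {E : Type*} (R : E → E → ℝ) (μ : E → ℝ) : Prop where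
  pos : ∀ η, 0 < μ η
  summable : Summable μ
  total : ∑' η, μ η = 1
  flux_summable : ∀ ξ, Summable fun η => μ η * R η ξ
  stat : ∀ ξ, ∑' η, μ η * R η ξ = 0
  lam_summable : Summable fun η => -R η η * μ η

/-- The adjoint rates `R*(η,ξ) = μ(ξ) R(ξ,η) / μ(η)` (same holding rates). -/
def adjRate {E : Type*} (R : E → E → ℝ) (μ : E → ℝ) (η ξ : E) : ℝ :=
  if η = ξ then R η η else μ ξ * R ξ η / μ η

/-- The rates of the chain collapsed at `B`: the state space is `(E ∖ B) ∪ {𝔡}`, modelled as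
`Option {η : E // η ∉ B}` with `none` playing the role of the collapsed point `𝔡`.
The diagonal entries are minus the holding rates. -/
def collapsedRate {E : Type*} (R : E → E → ℝ) (μ : E → ℝ) (B : Set E) :
    Option {η : E // η ∉ B} → Option {η : E // η ∉ B} → ℝ
  | some ξ, some ζ => R ξ.1 ζ.1
  | some ξ, none => ∑' ζ : B, R ξ.1 ζ.1
  | none, some ζ => (∑' ζ₀ : B, μ ζ₀.1)⁻¹ * ∑' ζ₀ : B, μ ζ₀.1 * R ζ₀.1 ζ.1
  | none, none =>
      -((∑' ζ₀ : B, μ ζ₀.1)⁻¹ *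
        ∑' ζ₀ : B, ∑' ξ : {η : E // η ∉ B}, μ ζ₀.1 * R ζ₀.1 ξ.1)

/-- The subset of the collapsed state space corresponding to `A ⊆ E ∖ B`. -/
def collapsedSet {E : Type*} (B A : Set E) : Set (Option {η : E // η ∉ B}) :=
  {z | ∃ η : {η : E // η ∉ B}, z = some η ∧ η.1 ∈ A}

/-- The jump rates of the trace on `F` of the chain with rates `R`:
`R_T(η,ξ) = λ(η) P_η[ℍ⁺_F < ∞ and Y_{ℍ⁺_F} = ξ]`. -/
def traceRate {E : Type*} (R : E → E → ℝ) (F : Set E) (η ξ : E) : ℝ :=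
  -R η η * retProb (jumpProb R) η F {ξ}

/-- `R_{TC}`: the jump rates of the trace on `G = (F∖B) ∪ {𝔡}` of the chain collapsed
at `B`. -/
def traceOfCollapsedRate {E : Type*} (R : E → E → ℝ) (μ : E → ℝ) (B F : Set E)
    (u v : Option {η : E // η ∉ B}) : ℝ :=
  -collapsedRate R μ B u u *
    retProb (jumpProb (collapsedRate R μ B)) u (insert none (collapsedSet B F)) {v}

/-- `R_{CT}`: the jump rates obtained by collapsing the set `B` in the trace chain
on `F`. -/
def collapsedTraceRate {E : Type*} (R : E → E → ℝ) (μ : E → ℝ) (B F : Set E) :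
    Option {η : E // η ∉ B} → Option {η : E // η ∉ B} → ℝ
  | some ξ, some ζ => traceRate R F ξ.1 ζ.1
  | some ξ, none => ∑' ζ : B, traceRate R F ξ.1 ζ.1
  | none, some ζ => (∑' ζ₀ : B, μ ζ₀.1)⁻¹ * ∑' ζ₀ : B, μ ζ₀.1 * traceRate R F ζ₀.1 ζ.1
  | none, none => 0

namespace StmtAux

open Function ENNReal

variable {E : Type*}

lemma tsum_eq_toReal_ofReal {ι : Type*} {f : ι → ℝ} (hf : ∀ i, 0 ≤ f i) :
    ∑' i, f i = (∑' i, ENNReal.ofReal (f i)).toReal := by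
  by_cases h : Summable f
  · rw [← ENNReal.ofReal_tsum_of_nonneg hf h, ENNReal.toReal_ofReal (tsum_nonneg hf)]
  · rw [tsum_eq_zero_of_not_summable h]
    have htop : ∑' i, ENNReal.ofReal (f i) = ∞ := by
      by_contra h'
      have h2 := ENNReal.summable_toReal h'
      simp only [ENNReal.toReal_ofReal (hf _)] at h2
      exact h h2
    rw [htop]; simp

lemma ofReal_prod {ι : Type*} (s : Finset ι) (f : ι → ℝ) (hf : ∀ i ∈ s, 0 ≤ f i) :
    ENNReal.ofReal (∏ i ∈ s, f i) = ∏ i ∈ s, ENNReal.ofReal (f i) := by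
  classical
  induction s using Finset.induction_on with
  | empty => simp
  | insert a s hx ih =>
    rw [Finset.prod_insert hx, Finset.prod_insert hx,
      ENNReal.ofReal_mul (hf a (Finset.mem_insert_self a s)),
      ih (fun i hi => hf i (Finset.mem_insert_of_mem hi))]

/-- The condition appearing in `retProb`. -/
abbrev Cond (η : E) (S T : Set E) (x : Σ n : ℕ, Fin (n + 2) → E) : Prop :=
  x.2 0 = η ∧ (∀ j : Fin (x.1 + 2), 0 < (j : ℕ) → (j : ℕ) < x.1 + 1 → x.2 j ∉ S) ∧
    x.2 (Fin.last (x.1 + 1)) ∈ T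

/-- The `ℝ≥0∞`-valued path weight. -/
def eW (p : E → E → ℝ) (x : Σ n : ℕ, Fin (n + 2) → E) : ℝ≥0∞ :=
  ∏ i : Fin (x.1 + 1), ENNReal.ofReal (p (x.2 i.castSucc) (x.2 i.succ))

/-- The `ℝ≥0∞`-valued version of `retProb`. -/
def eRet (p : E → E → ℝ) (η : E) (S T : Set E) : ℝ≥0∞ :=
  ∑' x : Σ n : ℕ, Fin (n + 2) → E, if Cond η S T x then eW p x else 0

lemma retProb_eq_toReal (p : E → E → ℝ) (hp : ∀ a b, 0 ≤ p a b) (η : E) (S T : Set E) :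
    retProb p η S T = (eRet p η S T).toReal := by
  have h1 : ∀ x : Σ n : ℕ, Fin (n + 2) → E,
      0 ≤ if Cond η S T x then pathWeight p x.2 else 0 := by
    intro x
    split
    · exact Finset.prod_nonneg fun i _ => hp _ _
    · exact le_rfl
  have h0 : retProb p η S T
      = ∑' x : Σ n : ℕ, Fin (n + 2) → E, if Cond η S T x then pathWeight p x.2 else 0 := rfl
  rw [h0, tsum_eq_toReal_ofReal h1]
  congr 1
  apply tsum_congr; intro x
  split
  · exact ofReal_prod _ _ fun i _ => hp _ _
  · simp

lemma retProb_nonneg (p : E → E → ℝ) (hp : ∀ a b, 0 ≤ p a b) (η : E) (S T : Set E) :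
    0 ≤ retProb p η S T := by
  rw [retProb_eq_toReal p hp]; exact ENNReal.toReal_nonneg

end StmtAux
namespace StmtAux

open Function ENNReal

variable {E : Type*}

section Rate

variable (R : E → E → ℝ)

lemma lam_pos (hR : IsRateMatrix R) (η : E) : 0 < -R η η := neg_pos.mpr (hR.diag_neg η)

lemma jumpProb_nonneg (hR : IsRateMatrix R) (a b : E) : 0 ≤ jumpProb R a b := by
  rw [jumpProb]
  split
  · exact le_rfl
  · exact div_nonneg (hR.offdiag_nonneg _ _ (by assumption)) (lam_pos R hR a).le

lemma jumpProb_ne (a b : E) (h : a ≠ b) : jumpProb R a b = R a b / (-R a a) := if_neg h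

/-- The off-diagonal part of a row of `R`. -/
def offRow (a : E) : E → ℝ := fun b => R a b + (if b = a then -(R a a) else 0)

lemma offRow_nonneg (hR : IsRateMatrix R) (a b : E) : 0 ≤ offRow R a b := by
  rw [offRow]
  by_cases h : b = a
  · simp [h]
  · simpa [h] using hR.offdiag_nonneg a b (Ne.symm h)

lemma offRow_ne (a b : E) (h : b ≠ a) : offRow R a b = R a b := by simp [offRow, h]

lemma offRow_summable (hR : IsRateMatrix R) (a : E) : Summable (offRow R a) :=
  (hR.row_summable a).add (hasSum_ite_eq a (-(R a a))).summable

lemma offRow_tsum (hR : IsRateMatrix R) (a : E) : ∑' b, offRow R a b = -R a a := by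
  rw [show offRow R a = fun b => R a b + (if b = a then -(R a a) else 0) from rfl,
    Summable.tsum_add (hR.row_summable a) (hasSum_ite_eq a (-(R a a))).summable,
    hR.row_sum a, tsum_ite_eq, zero_add]

lemma jumpProb_eq_offRow (a : E) : jumpProb R a = fun b => offRow R a b * (-R a a)⁻¹ := by
  funext b
  by_cases h : a = b
  · subst h; simp [jumpProb, offRow]
  · rw [jumpProb_ne R a b h, offRow_ne R a b (Ne.symm h), div_eq_mul_inv]

lemma jumpProb_summable (hR : IsRateMatrix R) (a : E) : Summable (jumpProb R a) := by
  rw [jumpProb_eq_offRow]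
  exact (offRow_summable R hR a).mul_right _

lemma jumpProb_tsum (hR : IsRateMatrix R) (a : E) : ∑' b, jumpProb R a b = 1 := by
  rw [jumpProb_eq_offRow, tsum_mul_right, offRow_tsum R hR a,
    mul_inv_cancel₀ (lam_pos R hR a).ne']

lemma jumpProb_tsum_ofReal (hR : IsRateMatrix R) (a : E) :
    ∑' b, ENNReal.ofReal (jumpProb R a b) = 1 := by
  rw [← ENNReal.ofReal_tsum_of_nonneg (jumpProb_nonneg R hR a) (jumpProb_summable R hR a),
    jumpProb_tsum R hR a, ENNReal.ofReal_one]

end Rate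

end StmtAux
namespace StmtAux

open Function ENNReal

variable {E : Type*}

/-- Appending a last point to a path, as an equivalence. -/
def snocE (E : Type*) (m : ℕ) : ((Fin (m + 1) → E) × E) ≃ (Fin (m + 2) → E) where
  toFun p := Fin.snoc p.1 p.2
  invFun γ := (fun i => γ i.castSucc, γ (Fin.last (m + 1)))
  left_inv p := by
    refine Prod.ext ?_ ?_
    · funext i; simp
    · simp
  right_inv γ := by
    funext j
    refine Fin.lastCases ?_ ?_ j
    · simp
    · intro i; simp

lemma tsum_snoc {m : ℕ} (f : (Fin (m + 2) → E) → ℝ≥0∞) :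
    ∑' γ : Fin (m + 2) → E, f γ = ∑' (γ : Fin (m + 1) → E) (x : E), f (Fin.snoc γ x) := by
  rw [← Equiv.tsum_eq (snocE E m) f, ENNReal.tsum_prod']
  exact tsum_congr fun a => tsum_congr fun b => rfl

lemma snoc_zero' {m : ℕ} (γ : Fin (m + 1) → E) (x : E) :
    (Fin.snoc γ x : Fin (m + 2) → E) 0 = γ 0 := by
  rw [show (0 : Fin (m + 2)) = Fin.castSucc 0 from (Fin.castSucc_zero).symm,
    Fin.snoc_castSucc]

/-- The "alive" condition for a path of length `m`. -/
abbrev LCond (η : E) (S : Set E) {m : ℕ} (γ : Fin (m + 1) → E) : Prop :=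
  γ 0 = η ∧ ∀ j : Fin (m + 1), 0 < (j : ℕ) → γ j ∉ S

/-- Weight of a finite path, `ℝ≥0∞`-valued. -/
abbrev W (p : E → E → ℝ) {m : ℕ} (γ : Fin (m + 1) → E) : ℝ≥0∞ :=
  ∏ i : Fin m, ENNReal.ofReal (p (γ i.castSucc) (γ i.succ))

lemma Cond_mk {n : ℕ} (η : E) (S T : Set E) (γ : Fin (n + 2) → E) :
    Cond η S T ⟨n, γ⟩ ↔ (γ 0 = η ∧
      (∀ j : Fin (n + 2), 0 < (j : ℕ) → (j : ℕ) < n + 1 → γ j ∉ S) ∧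
      γ (Fin.last (n + 1)) ∈ T) := Iff.rfl

lemma snoc_W (p : E → E → ℝ) {m : ℕ} (γ : Fin (m + 1) → E) (x : E) :
    W p (Fin.snoc γ x : Fin (m + 2) → E) = W p γ * ENNReal.ofReal (p (γ (Fin.last m)) x) := by
  rw [show W p (Fin.snoc γ x : Fin (m + 2) → E) = ∏ i : Fin (m + 1),
      ENNReal.ofReal (p ((Fin.snoc γ x : Fin (m + 2) → E) i.castSucc)
        ((Fin.snoc γ x : Fin (m + 2) → E) i.succ)) from rfl,
    Fin.prod_univ_castSucc]
  congr 1
  · apply Finset.prod_congr rfl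
    intro i _
    rw [Fin.succ_castSucc, Fin.snoc_castSucc, Fin.snoc_castSucc]
  · rw [Fin.succ_last, Fin.snoc_last, Fin.snoc_castSucc]

lemma eW_eq_W (p : E → E → ℝ) {n : ℕ} (γ : Fin (n + 2) → E) : eW p ⟨n, γ⟩ = W p γ := rfl

/-- Mass of paths of length `n + 1` satisfying the `retProb` condition. -/
def AA (p : E → E → ℝ) (η : E) (S T : Set E) (n : ℕ) : ℝ≥0∞ :=
  ∑' γ : Fin (n + 2) → E, if Cond η S T ⟨n, γ⟩ then eW p ⟨n, γ⟩ else 0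

/-- Mass of paths of length `m` avoiding `S` after time `0`. -/
def LL (p : E → E → ℝ) (η : E) (S : Set E) (m : ℕ) : ℝ≥0∞ :=
  ∑' γ : Fin (m + 1) → E, if LCond η S γ then W p γ else 0

lemma eRet_le_one (p : E → E → ℝ) (hrow : ∀ a, ∑' b, ENNReal.ofReal (p a b) ≤ 1)
    (η : E) (S T : Set E) (hTS : T ⊆ S) : eRet p η S T ≤ 1 := by
  classical
  have h0 : eRet p η S T = ∑' n, AA p η S T n := ENNReal.tsum_sigma' _
  -- condition on a `snoc` path, for `AA`
  have hcondA : ∀ (n : ℕ) (γ : Fin (n + 1) → E) (x : E),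
      Cond η S T ⟨n, Fin.snoc γ x⟩ ↔ (LCond η S γ ∧ x ∈ T) := by
    intro n γ x
    rw [Cond_mk]
    constructor
    · rintro ⟨h1, h2, h3⟩
      rw [snoc_zero'] at h1
      refine ⟨⟨h1, ?_⟩, ?_⟩
      · intro j hj
        have h4 := h2 j.castSucc (by simpa using hj) (by simpa using j.isLt)
        rwa [Fin.snoc_castSucc] at h4
      · rwa [Fin.snoc_last] at h3
    · rintro ⟨⟨h1, h2⟩, h3⟩
      refine ⟨by rwa [snoc_zero'], ?_, by rwa [Fin.snoc_last]⟩
      intro j hj1 hj2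
      have hj3 : (j : ℕ) < n + 1 := hj2
      have hje : j = Fin.castSucc ⟨(j : ℕ), hj3⟩ := by apply Fin.ext; simp
      rw [hje, Fin.snoc_castSucc]
      exact h2 _ (by simpa using hj1)
  -- condition on a `snoc` path, for `LL`
  have hcondL : ∀ (n : ℕ) (γ : Fin (n + 1) → E) (x : E),
      LCond η S (Fin.snoc γ x : Fin (n + 2) → E) ↔ (LCond η S γ ∧ x ∉ S) := by
    intro n γ x
    constructor
    · rintro ⟨h1, h2⟩
      rw [snoc_zero'] at h1
      refine ⟨⟨h1, ?_⟩, ?_⟩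
      · intro j hj
        have h4 := h2 j.castSucc (by simpa using hj)
        rwa [Fin.snoc_castSucc] at h4
      · have h4 := h2 (Fin.last (n + 1)) (by simp)
        rwa [Fin.snoc_last] at h4
    · rintro ⟨⟨h1, h2⟩, h3⟩
      refine ⟨by rwa [snoc_zero'], ?_⟩
      intro j hj1
      rcases Nat.lt_or_ge (j : ℕ) (n + 1) with hj2 | hj2
      · have hje : j = Fin.castSucc ⟨(j : ℕ), hj2⟩ := by apply Fin.ext; simp
        rw [hje, Fin.snoc_castSucc]
        exact h2 _ (by simpa using hj1)
      · have hje : j = Fin.last (n + 1) := by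
          apply Fin.ext
          have := j.isLt
          simp only [Fin.val_last]
          omega
        rw [hje, Fin.snoc_last]
        exact h3
  -- key inequality
  have hkey : ∀ n, AA p η S T n + LL p η S (n + 1) ≤ LL p η S n := by
    intro n
    have hA' : AA p η S T n = ∑' γ : Fin (n + 1) → E,
        if LCond η S γ then
          W p γ * ∑' x : E, T.indicator (fun y => ENNReal.ofReal (p (γ (Fin.last n)) y)) x
        else 0 := by
      rw [AA, tsum_snoc]
      apply tsum_congr; intro γ
      by_cases hc : LCond η S γ
      · rw [if_pos hc]
        calc (∑' x : E, if Cond η S T ⟨n, Fin.snoc γ x⟩ then eW p ⟨n, Fin.snoc γ x⟩ else 0)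
            = ∑' x : E, W p γ *
                T.indicator (fun y => ENNReal.ofReal (p (γ (Fin.last n)) y)) x := by
              apply tsum_congr; intro x
              by_cases hx : x ∈ T
              · rw [if_pos ((hcondA n γ x).2 ⟨hc, hx⟩), Set.indicator_of_mem hx,
                  eW_eq_W, snoc_W]
              · rw [if_neg (fun hco => hx ((hcondA n γ x).1 hco).2),
                  Set.indicator_of_notMem hx, mul_zero]
          _ = _ := ENNReal.tsum_mul_left
      · rw [if_neg hc]
        calc (∑' x : E, if Cond η S T ⟨n, Fin.snoc γ x⟩ then eW p ⟨n, Fin.snoc γ x⟩ else 0)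
            = ∑' x : E, (0 : ℝ≥0∞) := by
              apply tsum_congr; intro x
              rw [if_neg (fun hco => hc ((hcondA n γ x).1 hco).1)]
          _ = 0 := tsum_zero
    have hL' : LL p η S (n + 1) = ∑' γ : Fin (n + 1) → E,
        if LCond η S γ then
          W p γ * ∑' x : E, (Sᶜ).indicator (fun y => ENNReal.ofReal (p (γ (Fin.last n)) y)) x
        else 0 := by
      rw [LL, tsum_snoc]
      apply tsum_congr; intro γ
      by_cases hc : LCond η S γ
      · rw [if_pos hc]
        calc (∑' x : E, if LCond η S (Fin.snoc γ x : Fin (n + 2) → E)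
                then W p (Fin.snoc γ x : Fin (n + 2) → E) else 0)
            = ∑' x : E, W p γ *
                (Sᶜ).indicator (fun y => ENNReal.ofReal (p (γ (Fin.last n)) y)) x := by
              apply tsum_congr; intro x
              by_cases hx : x ∈ Sᶜ
              · rw [if_pos ((hcondL n γ x).2 ⟨hc, hx⟩), Set.indicator_of_mem hx, snoc_W]
              · rw [if_neg (fun hco => hx ((hcondL n γ x).1 hco).2),
                  Set.indicator_of_notMem hx, mul_zero]
          _ = _ := ENNReal.tsum_mul_left
      · rw [if_neg hc]
        calc (∑' x : E, if LCond η S (Fin.snoc γ x : Fin (n + 2) → E)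
                then W p (Fin.snoc γ x : Fin (n + 2) → E) else 0)
            = ∑' x : E, (0 : ℝ≥0∞) := by
              apply tsum_congr; intro x
              rw [if_neg (fun hco => hc ((hcondL n γ x).1 hco).1)]
          _ = 0 := tsum_zero
    rw [hA', hL', ← ENNReal.tsum_add, LL]
    apply ENNReal.tsum_le_tsum
    intro γ
    by_cases hc : LCond η S γ
    · rw [if_pos hc, if_pos hc, if_pos hc, ← mul_add]
      calc W p γ * ((∑' x : E, T.indicator (fun y => ENNReal.ofReal (p (γ (Fin.last n)) y)) x)
              + ∑' x : E, (Sᶜ).indicator (fun y => ENNReal.ofReal (p (γ (Fin.last n)) y)) x)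
          ≤ W p γ * 1 := by
            apply mul_le_mul_right
            calc (∑' x : E, T.indicator (fun y => ENNReal.ofReal (p (γ (Fin.last n)) y)) x)
                  + ∑' x : E, (Sᶜ).indicator (fun y => ENNReal.ofReal (p (γ (Fin.last n)) y)) x
                = ∑' x : E, (T.indicator (fun y => ENNReal.ofReal (p (γ (Fin.last n)) y)) x
                  + (Sᶜ).indicator (fun y => ENNReal.ofReal (p (γ (Fin.last n)) y)) x) :=
                  (ENNReal.tsum_add).symm
              _ ≤ ∑' x : E, ENNReal.ofReal (p (γ (Fin.last n)) x) := by
                  apply ENNReal.tsum_le_tsum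
                  intro x
                  by_cases hx : x ∈ T
                  · rw [Set.indicator_of_mem hx,
                      Set.indicator_of_notMem (Set.notMem_compl_iff.2 (hTS hx)), add_zero]
                  · rw [Set.indicator_of_notMem hx, zero_add]
                    exact Set.indicator_le_self _ _ x
              _ ≤ 1 := hrow _
        _ = W p γ := mul_one _
    · simp [if_neg hc]
  -- LL 0 = 1
  have hL0 : LL p η S 0 = 1 := by
    rw [LL]
    have hterm : ∀ γ : Fin 1 → E, (if LCond η S γ then W p γ else 0) =
        if γ 0 = η then (1 : ℝ≥0∞) else 0 := by
      intro γ
      have h1 : LCond η S γ ↔ γ 0 = η := by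
        constructor
        · exact fun h => h.1
        · intro h
          refine ⟨h, ?_⟩
          intro j hj
          have := j.isLt
          omega
      have h2 : W p γ = 1 := Fin.prod_univ_zero _
      rw [h2]
      exact if_congr h1 rfl rfl
    calc (∑' γ : Fin 1 → E, if LCond η S γ then W p γ else 0)
        = ∑' γ : Fin 1 → E, if γ 0 = η then (1 : ℝ≥0∞) else 0 := tsum_congr hterm
      _ = ∑' a : E, if (fun _ : Fin 1 => a) 0 = η then (1 : ℝ≥0∞) else 0 := by
          rw [← (Equiv.funUnique (Fin 1) E).symm.tsum_eq
            (fun γ : Fin 1 → E => if γ 0 = η then (1 : ℝ≥0∞) else 0)]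
          exact tsum_congr fun a => rfl
      _ = 1 := tsum_ite_eq η 1
  -- partial sums
  have hpart : ∀ N, (∑ n ∈ Finset.range N, AA p η S T n) + LL p η S N ≤ 1 := by
    intro N
    induction N with
    | zero => simp [hL0]
    | succ N ih =>
      calc (∑ n ∈ Finset.range (N + 1), AA p η S T n) + LL p η S (N + 1)
          = (∑ n ∈ Finset.range N, AA p η S T n) + (AA p η S T N + LL p η S (N + 1)) := by
            rw [Finset.sum_range_succ, add_assoc]
        _ ≤ (∑ n ∈ Finset.range N, AA p η S T n) + LL p η S N := add_le_add_right (hkey N) _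
        _ ≤ 1 := ih
  rw [h0, ENNReal.tsum_eq_iSup_sum]
  apply iSup_le
  intro s
  calc (∑ n ∈ s, AA p η S T n) ≤ ∑ n ∈ Finset.range (s.sup id + 1), AA p η S T n := by
        apply Finset.sum_le_sum_of_subset
        intro n hn
        exact Finset.mem_range.2 (Nat.lt_succ_of_le (Finset.le_sup (f := id) hn))
    _ ≤ 1 := le_trans le_self_add (hpart _)

lemma eRet_ne_top (R : E → E → ℝ) (hR : IsRateMatrix R) (η : E) (S T : Set E) (hTS : T ⊆ S) :
    eRet (jumpProb R) η S T ≠ ∞ :=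
  (lt_of_le_of_lt (eRet_le_one (jumpProb R) (fun a => le_of_eq (jumpProb_tsum_ofReal R hR a))
    η S T hTS) ENNReal.one_lt_top).ne

end StmtAux
namespace StmtAux

open Function ENNReal

variable {E : Type*}

section Collapsed

variable (R : E → E → ℝ) (μ : E → ℝ) (B F : Set E)

lemma cr_some_some (ξ ζ : {η : E // η ∉ B}) :
    collapsedRate R μ B (some ξ) (some ζ) = R ξ.1 ζ.1 := rfl

lemma cr_some_none (ξ : {η : E // η ∉ B}) :
    collapsedRate R μ B (some ξ) none = ∑' ζ : B, R ξ.1 ζ.1 := rfl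

lemma cr_none_some (ζ : {η : E // η ∉ B}) :
    collapsedRate R μ B none (some ζ)
      = (∑' ζ₀ : B, μ ζ₀.1)⁻¹ * ∑' ζ₀ : B, μ ζ₀.1 * R ζ₀.1 ζ.1 := rfl

lemma cr_none_none :
    collapsedRate R μ B none none
      = -((∑' ζ₀ : B, μ ζ₀.1)⁻¹ *
          ∑' ζ₀ : B, ∑' ξ : {η : E // η ∉ B}, μ ζ₀.1 * R ζ₀.1 ξ.1) := rfl

lemma pC_some_some (ξ ζ : {η : E // η ∉ B}) :
    jumpProb (collapsedRate R μ B) (some ξ) (some ζ) = jumpProb R ξ.1 ζ.1 := by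
  simp only [jumpProb, cr_some_some]
  by_cases h : ξ = ζ
  · rw [if_pos (by rw [h]), if_pos (by rw [h])]
  · rw [if_neg (fun he => h (by simpa using he)), if_neg (fun he => h (Subtype.ext he))]

lemma mem_G_some {a : {η : E // η ∉ B}} :
    some a ∈ insert none (collapsedSet B F) ↔ a.1 ∈ F := by
  rw [Set.mem_insert_iff]
  constructor
  · rintro (h | h)
    · exact absurd h (by simp)
    · obtain ⟨b, hb, hmem⟩ := h
      rw [Option.some_inj] at hb
      rw [hb]
      exact hmem
  · intro h
    exact Or.inr ⟨a, rfl, h⟩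

lemma not_mem_G {u : Option {η : E // η ∉ B}} :
    u ∉ insert none (collapsedSet B F) ↔ ∃ a, u = some a ∧ a.1 ∉ F := by
  cases u with
  | none => simp
  | some a =>
    rw [mem_G_some]
    constructor
    · intro h
      exact ⟨a, rfl, h⟩
    · rintro ⟨b, hb, hbF⟩
      rw [Option.some_inj] at hb
      rw [hb]
      exact hbF

/-- Projection from the collapsed state space back to `E`; `𝔡 ↦ e₀`. -/
def toE (e₀ : E) : Option {η : E // η ∉ B} → E := fun u => u.elim e₀ Subtype.val

@[simp] lemma toE_some (e₀ : E) (a : {η : E // η ∉ B}) : toE B e₀ (some a) = a.1 := rfl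

lemma pC_toE (e₀ : E) (u v : Option {η : E // η ∉ B}) (hu : u ≠ none) (hv : v ≠ none) :
    jumpProb (collapsedRate R μ B) u v = jumpProb R (toE B e₀ u) (toE B e₀ v) := by
  match u, v with
  | none, _ => exact absurd rfl hu
  | some a, none => exact absurd rfl hv
  | some a, some b => exact pC_some_some R μ B a b

/-- Lifting a path in `E` to the collapsed state space, sending the indices in `K`
to the collapsed point `𝔡`. -/
def liftP {n : ℕ} (K : Set ℕ) (δ : Fin n → E) : Fin n → Option {η : E // η ∉ B} :=
  fun j => if (j : ℕ) ∈ K then none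
    else if hb : δ j ∈ B then none else some ⟨δ j, hb⟩

lemma liftP_some {n : ℕ} (K : Set ℕ) (δ : Fin n → E) (j : Fin n)
    (h1 : (j : ℕ) ∉ K) (h2 : δ j ∉ B) : liftP B K δ j = some ⟨δ j, h2⟩ := by
  rw [liftP, if_neg h1, dif_neg h2]

lemma liftP_none {n : ℕ} (K : Set ℕ) (δ : Fin n → E) (j : Fin n)
    (h1 : (j : ℕ) ∈ K) : liftP B K δ j = none := by
  rw [liftP, if_pos h1]

end Collapsed

section Positivity

variable (R : E → E → ℝ) (μ : E → ℝ) (B F : Set E)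

lemma muB_pos (hμ : IsStationaryRate R μ) (hB : B.Nonempty) : 0 < ∑' ζ : B, μ ζ.1 := by
  obtain ⟨a, ha⟩ := hB
  exact Summable.tsum_pos (hμ.summable.subtype B) (fun ζ => (hμ.pos ζ.1).le) ⟨a, ha⟩ (hμ.pos a)

lemma exists_exit (B : Set E) :
    ∀ {n : ℕ} (γ : Fin (n + 1) → E), γ 0 ∈ B → γ (Fin.last n) ∉ B →
      ∃ i : Fin n, γ i.castSucc ∈ B ∧ γ i.succ ∉ B := by
  intro n
  induction n with
  | zero => intro γ h0 h1; exact absurd h0 h1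
  | succ n ih =>
    intro γ h0 h1
    by_cases h : γ (Fin.last n).castSucc ∈ B
    · exact ⟨Fin.last n, h, by rwa [Fin.succ_last]⟩
    · obtain ⟨i, hi1, hi2⟩ := ih (γ ∘ Fin.castSucc) (by simpa using h0) h
      refine ⟨i.castSucc, hi1, ?_⟩
      rw [Fin.succ_castSucc]
      exact hi2

lemma exists_crossing (hR : IsRateMatrix R) (hirr : MCIrreducible (jumpProb R))
    (hB : B.Nonempty) (hBF : B ⊆ F) (hF : F ≠ Set.univ) :
    ∃ a ∈ B, ∃ b, b ∉ B ∧ 0 < R a b := by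
  obtain ⟨a0, ha0⟩ := hB
  obtain ⟨b0, hb0⟩ := (Set.ne_univ_iff_exists_notMem F).1 hF
  obtain ⟨n, γ, h0, hl, hw⟩ := hirr a0 b0
  have hlB : γ (Fin.last n) ∉ B := fun hb => hb0 (hBF (hl ▸ hb))
  obtain ⟨i, hi1, hi2⟩ := exists_exit B γ (h0 ▸ ha0) hlB
  refine ⟨γ i.castSucc, hi1, γ i.succ, hi2, ?_⟩
  have hne : γ i.castSucc ≠ γ i.succ := fun h => hi2 (h ▸ hi1)
  have hfac : 0 < jumpProb R (γ i.castSucc) (γ i.succ) := by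
    rcases lt_or_eq_of_le (jumpProb_nonneg R hR (γ i.castSucc) (γ i.succ)) with h | h
    · exact h
    · exfalso
      have : pathWeight (jumpProb R) γ = 0 :=
        Finset.prod_eq_zero (Finset.mem_univ i) h.symm
      rw [this] at hw
      exact lt_irrefl 0 hw
  rw [jumpProb_ne R _ _ hne] at hfac
  have h2 := mul_pos hfac (lam_pos R hR (γ i.castSucc))
  rwa [div_mul_cancel₀ _ (lam_pos R hR (γ i.castSucc)).ne'] at h2

lemma inner_nonneg (hR : IsRateMatrix R) (hμ : IsStationaryRate R μ) (ζ₀ : B)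
    (a : E) (ha : a ∉ B) : 0 ≤ μ ζ₀.1 * R ζ₀.1 a :=
  mul_nonneg (hμ.pos ζ₀.1).le (hR.offdiag_nonneg _ _ (fun h => ha (h ▸ ζ₀.2)))

lemma tsum_notB_le (hR : IsRateMatrix R) {a : E} (ha : a ∈ B) :
    ∑' ξ : {η : E // η ∉ B}, R a ξ.1 ≤ -R a a := by
  have h1 : ∑' ξ : {η : E // η ∉ B}, R a ξ.1 = ∑' b, ({η : E | η ∉ B}).indicator (R a) b :=
    tsum_subtype {η : E | η ∉ B} (R a)
  rw [h1, ← offRow_tsum R hR a]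
  apply Summable.tsum_le_tsum _ ((hR.row_summable a).indicator _) (offRow_summable R hR a)
  intro b
  by_cases hb : b ∈ {η : E | η ∉ B}
  · rw [Set.indicator_of_mem hb, offRow_ne R a b (fun h => hb (h ▸ ha))]
  · rw [Set.indicator_of_notMem hb]
    exact offRow_nonneg R hR a b

lemma lamC_pos (hR : IsRateMatrix R) (hμ : IsStationaryRate R μ)
    (hirr : MCIrreducible (jumpProb R)) (hB : B.Nonempty) (hBF : B ⊆ F)
    (hF : F ≠ Set.univ) :
    0 < (∑' ζ₀ : B, μ ζ₀.1)⁻¹ *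
      ∑' ζ₀ : B, ∑' ξ : {η : E // η ∉ B}, μ ζ₀.1 * R ζ₀.1 ξ.1 := by
  apply mul_pos (inv_pos.2 (muB_pos R μ B hμ hB))
  set g : B → ℝ := fun ζ₀ => ∑' ξ : {η : E // η ∉ B}, μ ζ₀.1 * R ζ₀.1 ξ.1 with hg
  have hgnn : ∀ ζ₀, 0 ≤ g ζ₀ :=
    fun ζ₀ => tsum_nonneg fun ξ => inner_nonneg R μ B hR hμ ζ₀ ξ.1 ξ.2
  have hgle : ∀ ζ₀ : B, g ζ₀ ≤ μ ζ₀.1 * (-R ζ₀.1 ζ₀.1) := by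
    intro ζ₀
    rw [hg]
    calc (∑' ξ : {η : E // η ∉ B}, μ ζ₀.1 * R ζ₀.1 ξ.1)
        = μ ζ₀.1 * ∑' ξ : {η : E // η ∉ B}, R ζ₀.1 ξ.1 := tsum_mul_left
      _ ≤ μ ζ₀.1 * (-R ζ₀.1 ζ₀.1) :=
          mul_le_mul_of_nonneg_left (tsum_notB_le R B hR ζ₀.2) (hμ.pos ζ₀.1).le
  have hgsum : Summable g := by
    apply Summable.of_nonneg_of_le hgnn hgle
    have := hμ.lam_summable.subtype B
    apply Summable.congr this
    intro ζ₀
    show -R ζ₀.1 ζ₀.1 * μ ζ₀.1 = _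
    ring
  obtain ⟨a, ha, b, hb, hab⟩ := exists_crossing R B F hR hirr hB hBF hF
  have hpos : 0 < g ⟨a, ha⟩ := by
    rw [hg]
    have hsum : Summable fun ξ : {η : E // η ∉ B} => μ a * R a ξ.1 :=
      ((hR.row_summable a).mul_left (μ a)).subtype _
    have hle := Summable.le_tsum hsum ⟨b, hb⟩
      (fun ξ _ => inner_nonneg R μ B hR hμ ⟨a, ha⟩ ξ.1 ξ.2)
    calc (0 : ℝ) < μ a * R a b := mul_pos (hμ.pos a) hab
      _ ≤ _ := hle
  exact Summable.tsum_pos hgsum hgnn ⟨a, ha⟩ hpos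

lemma lamC_eq : -collapsedRate R μ B none none
    = (∑' ζ₀ : B, μ ζ₀.1)⁻¹ *
      ∑' ζ₀ : B, ∑' ξ : {η : E // η ∉ B}, μ ζ₀.1 * R ζ₀.1 ξ.1 := by
  rw [cr_none_none, neg_neg]

lemma cr_diag_nonpos (hR : IsRateMatrix R) (hμ : IsStationaryRate R μ)
    (u : Option {η : E // η ∉ B}) : 0 ≤ -collapsedRate R μ B u u := by
  cases u with
  | some a =>
    rw [show -collapsedRate R μ B (some a) (some a) = -R a.1 a.1 from rfl]
    exact (lam_pos R hR a.1).le
  | none =>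
    rw [lamC_eq]
    exact mul_nonneg (inv_nonneg.2 (tsum_nonneg fun ζ => (hμ.pos ζ.1).le))
      (tsum_nonneg fun ζ => tsum_nonneg fun ξ => inner_nonneg R μ B hR hμ ζ ξ.1 ξ.2)

lemma cr_offdiag_nonneg (hR : IsRateMatrix R) (hμ : IsStationaryRate R μ)
    {u v : Option {η : E // η ∉ B}} (huv : u ≠ v) : 0 ≤ collapsedRate R μ B u v := by
  cases u with
  | some a =>
    cases v with
    | some b =>
      rw [cr_some_some]
      exact hR.offdiag_nonneg _ _
        (fun h => huv (by rw [show a = b from Subtype.ext h]))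
    | none =>
      rw [cr_some_none]
      exact tsum_nonneg fun ζ => hR.offdiag_nonneg _ _ (fun h => a.2 (h ▸ ζ.2))
  | none =>
    cases v with
    | some b =>
      rw [cr_none_some]
      exact mul_nonneg (inv_nonneg.2 (tsum_nonneg fun ζ => (hμ.pos ζ.1).le))
        (tsum_nonneg fun ζ => inner_nonneg R μ B hR hμ ζ b.1 b.2)
    | none => exact absurd rfl huv

lemma pC_nonneg (hR : IsRateMatrix R) (hμ : IsStationaryRate R μ) (u v : Option {η : E // η ∉ B}) :
    0 ≤ jumpProb (collapsedRate R μ B) u v := by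
  simp only [jumpProb]
  split
  · exact le_rfl
  · rename_i huv
    exact div_nonneg (cr_offdiag_nonneg R μ B hR hμ huv) (cr_diag_nonpos R μ B hR hμ u)

end Positivity

end StmtAux
namespace StmtAux

open Function ENNReal

variable {E : Type*}

lemma eRet_def (p : E → E → ℝ) (η : E) (S T : Set E) :
    eRet p η S T = ∑' x : Σ n : ℕ, Fin (n + 2) → E,
      if Cond η S T x then eW p x else 0 := rfl

lemma eW_mk {n : ℕ} (p : E → E → ℝ) (γ : Fin (n + 2) → E) :
    eW p ⟨n, γ⟩ = ∏ i : Fin (n + 1), ENNReal.ofReal (p (γ i.castSucc) (γ i.succ)) := rfl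

lemma ite_ne_zero_imp {c : Prop} {inst : Decidable c} {a : ℝ≥0∞}
    (h : (@ite _ c inst a 0) ≠ 0) : c := by
  by_contra hc
  rw [if_neg hc] at h
  exact h rfl

section Collapsed

variable (R : E → E → ℝ) (μ : E → ℝ) (B F : Set E)

lemma toE_inj (e₀ : E) {u v : Option {η : E // η ∉ B}} (hu : u ≠ none) (hv : v ≠ none)
    (h : toE B e₀ u = toE B e₀ v) : u = v := by
  match u, v with
  | some a, some b => exact congrArg some (Subtype.ext h)
  | none, _ => exact absurd rfl hu
  | some a, none => exact absurd rfl hv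

lemma cond_some (ξ ζ : {η : E // η ∉ B}) {n : ℕ}
    {γ : Fin (n + 2) → Option {η : E // η ∉ B}}
    (hc : Cond (some ξ) (insert none (collapsedSet B F)) {some ζ} ⟨n, γ⟩) :
    ∀ j, γ j ≠ none := by
  obtain ⟨h1, h2, h3⟩ := (Cond_mk _ _ _ _).1 hc
  intro j
  rcases Nat.eq_zero_or_pos (j : ℕ) with hj0 | hj0
  · have hj : j = 0 := Fin.ext (by simpa using hj0)
    rw [hj, show γ 0 = some ξ from h1]
    simp
  · rcases Nat.lt_or_ge (j : ℕ) (n + 1) with hj1 | hj1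
    · obtain ⟨a, ha, _⟩ := (not_mem_G B F).1 (h2 j hj0 hj1)
      rw [ha]
      simp
    · have hj : j = Fin.last (n + 1) := by
        apply Fin.ext
        have := j.isLt
        simp only [Fin.val_last]
        omega
      rw [hj, show γ (Fin.last (n + 1)) = some ζ from Set.mem_singleton_iff.1 h3]
      simp

lemma hW_toE (hR : IsRateMatrix R) (e₀ : E) {n : ℕ}
    {γ : Fin (n + 2) → Option {η : E // η ∉ B}} (h : ∀ j, γ j ≠ none) :
    eW (jumpProb R) ⟨n, fun j => toE B e₀ (γ j)⟩
      = eW (jumpProb (collapsedRate R μ B)) ⟨n, γ⟩ := by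
  rw [eW_mk, eW_mk]
  exact Finset.prod_congr rfl fun i _ => by
    rw [pC_toE R μ B e₀ _ _ (h _) (h _)]

/-- Lemma A: rates between regular states agree. -/
lemma eRetC_some_some (hR : IsRateMatrix R) (hBF : B ⊆ F) (e₀ : E)
    (ξ ζ : {η : E // η ∉ B}) :
    eRet (jumpProb (collapsedRate R μ B)) (some ξ) (insert none (collapsedSet B F)) {some ζ}
      = eRet (jumpProb R) ξ.1 F {ζ.1} := by
  classical
  rw [eRet_def, eRet_def]
  refine (tsum_eq_tsum_of_ne_zero_bij
    (fun x => ⟨x.1.1, fun j => toE B e₀ (x.1.2 j)⟩) ?_ ?_ ?_).symm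
  -- injectivity
  · rintro ⟨⟨n1, γ1⟩, hx1⟩ ⟨⟨n2, γ2⟩, hx2⟩ heq
    have hc1 := ite_ne_zero_imp hx1
    have hc2 := ite_ne_zero_imp hx2
    obtain ⟨hn, hh⟩ := Sigma.mk.inj_iff.mp heq
    subst hn
    have hfun := eq_of_heq hh
    apply Subtype.ext
    show (⟨n1, γ1⟩ : Σ n : ℕ, Fin (n + 2) → Option {η : E // η ∉ B}) = ⟨n1, γ2⟩
    have hγ : γ1 = γ2 := by
      funext j
      exact toE_inj B e₀ (cond_some B F ξ ζ hc1 j) (cond_some B F ξ ζ hc2 j)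
        (congrFun hfun j)
    rw [hγ]
  -- support
  · rintro ⟨n, δ⟩ hy
    have hc := ite_ne_zero_imp hy
    obtain ⟨h1, h2, h3⟩ := (Cond_mk _ _ _ _).1 hc
    have hnB : ∀ j : Fin (n + 2), δ j ∉ B := by
      intro j
      rcases Nat.eq_zero_or_pos (j : ℕ) with hj0 | hj0
      · have hj : j = 0 := Fin.ext (by simpa using hj0)
        rw [hj, show δ 0 = ξ.1 from h1]
        exact ξ.2
      · rcases Nat.lt_or_ge (j : ℕ) (n + 1) with hj1 | hj1
        · exact fun hb => (h2 j hj0 hj1) (hBF hb)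
        · have hj : j = Fin.last (n + 1) := by
            apply Fin.ext
            have := j.isLt
            simp only [Fin.val_last]
            omega
          rw [hj, show δ (Fin.last (n + 1)) = ζ.1 from Set.mem_singleton_iff.1 h3]
          exact ζ.2
    set γ : Fin (n + 2) → Option {η : E // η ∉ B} := liftP B ∅ δ with hγdef
    have hγj : ∀ j, γ j = some ⟨δ j, hnB j⟩ :=
      fun j => liftP_some B ∅ δ j (Set.notMem_empty _) (hnB j)
    have hcondγ : Cond (some ξ) (insert none (collapsedSet B F)) {some ζ} ⟨n, γ⟩ := by
      rw [Cond_mk]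
      refine ⟨?_, ?_, ?_⟩
      · rw [show γ 0 = some ⟨δ 0, hnB 0⟩ from hγj 0]
        exact congrArg some (Subtype.ext h1)
      · intro j hj0 hj1
        rw [show γ j = some ⟨δ j, hnB j⟩ from hγj j]
        rw [mem_G_some]
        exact h2 j hj0 hj1
      · rw [show γ (Fin.last (n + 1)) = some ⟨δ (Fin.last (n + 1)), _⟩ from hγj _]
        exact Set.mem_singleton_iff.2
          (congrArg some (Subtype.ext (Set.mem_singleton_iff.1 h3)))
    have htoE : (fun j => toE B e₀ (γ j)) = δ := by
      funext j
      rw [hγj j, toE_some]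
    have hsomeγ : ∀ j, γ j ≠ none := fun j => by
      rw [hγj j]
      simp
    refine ⟨⟨⟨n, γ⟩, ?_⟩, ?_⟩
    · rw [Function.mem_support]
      try dsimp only
      rw [if_pos hcondγ, ← hW_toE R μ B hR e₀ hsomeγ]
      rw [show (⟨n, fun j => toE B e₀ (γ j)⟩ : Σ n : ℕ, Fin (n + 2) → E) = ⟨n, δ⟩
        from by rw [htoE]]
      intro h0
      apply hy
      try dsimp only
      rw [if_pos ((Cond_mk _ _ _ _).2 ⟨h1, h2, h3⟩), h0]
    · dsimp only
      rw [show (⟨n, fun j => toE B e₀ (γ j)⟩ : Σ n : ℕ, Fin (n + 2) → E) = ⟨n, δ⟩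
        from by rw [htoE]]
  -- values
  · rintro ⟨⟨n, γ⟩, hx⟩
    have hc := ite_ne_zero_imp hx
    try dsimp only
    have hcF : Cond ξ.1 F {ζ.1} ⟨n, fun j => toE B e₀ (γ j)⟩ := by
      obtain ⟨h1, h2, h3⟩ := (Cond_mk _ _ _ _).1 hc
      rw [Cond_mk]
      refine ⟨?_, ?_, ?_⟩
      · show toE B e₀ (γ 0) = ξ.1
        rw [show γ 0 = some ξ from h1, toE_some]
      · intro j hj0 hj1
        obtain ⟨a, ha, haF⟩ := (not_mem_G B F).1 (h2 j hj0 hj1)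
        show toE B e₀ (γ j) ∉ F
        rw [ha, toE_some]
        exact haF
      · show toE B e₀ (γ (Fin.last (n + 1))) ∈ ({ζ.1} : Set E)
        rw [show γ (Fin.last (n + 1)) = some ζ from Set.mem_singleton_iff.1 h3, toE_some]
        exact Set.mem_singleton _
    rw [if_pos hcF, if_pos hc]
    exact hW_toE R μ B hR e₀ (cond_some B F ξ ζ hc)

end Collapsed

end StmtAux
namespace StmtAux

open Function ENNReal

variable {E : Type*}

/-- All factors of the path weight except the last one. -/
def WF {α : Type*} (p : α → α → ℝ) (x : Σ n : ℕ, Fin (n + 2) → α) : ℝ≥0∞ :=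
  ∏ i : Fin x.1, ENNReal.ofReal (p (x.2 i.castSucc.castSucc) (x.2 i.castSucc.succ))

/-- All factors of the path weight except the first one. -/
def WB {α : Type*} (p : α → α → ℝ) (x : Σ n : ℕ, Fin (n + 2) → α) : ℝ≥0∞ :=
  ∏ i : Fin x.1, ENNReal.ofReal (p (x.2 i.succ.castSucc) (x.2 i.succ.succ))

lemma WF_mk {α : Type*} (p : α → α → ℝ) {n : ℕ} (γ : Fin (n + 2) → α) :
    WF p ⟨n, γ⟩ = ∏ i : Fin n,
      ENNReal.ofReal (p (γ i.castSucc.castSucc) (γ i.castSucc.succ)) := rfl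

lemma WB_mk {α : Type*} (p : α → α → ℝ) {n : ℕ} (γ : Fin (n + 2) → α) :
    WB p ⟨n, γ⟩ = ∏ i : Fin n,
      ENNReal.ofReal (p (γ i.succ.castSucc) (γ i.succ.succ)) := rfl

lemma eW_split_last {α : Type*} (p : α → α → ℝ) {n : ℕ} (γ : Fin (n + 2) → α) :
    eW p ⟨n, γ⟩ = WF p ⟨n, γ⟩
      * ENNReal.ofReal (p (γ (Fin.last n).castSucc) (γ (Fin.last (n + 1)))) := by
  rw [eW_mk, Fin.prod_univ_castSucc, Fin.succ_last]
  rfl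

lemma eW_split_first {α : Type*} (p : α → α → ℝ) {n : ℕ} (γ : Fin (n + 2) → α) :
    eW p ⟨n, γ⟩ = ENNReal.ofReal (p (γ 0) (γ 1)) * WB p ⟨n, γ⟩ := by
  rw [eW_mk, Fin.prod_univ_succ, Fin.castSucc_zero, Fin.succ_zero_eq_one]
  rfl

section Collapsed

variable (R : E → E → ℝ) (μ : E → ℝ) (B F : Set E)

lemma WF_toE (e₀ : E) {n : ℕ} {γ : Fin (n + 2) → Option {η : E // η ∉ B}}
    {δ : Fin (n + 2) → E}
    (hno : ∀ j : Fin (n + 2), (j : ℕ) ≠ n + 1 → γ j ≠ none)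
    (hδ : ∀ j : Fin (n + 2), (j : ℕ) ≠ n + 1 → δ j = toE B e₀ (γ j)) :
    WF (jumpProb R) ⟨n, δ⟩ = WF (jumpProb (collapsedRate R μ B)) ⟨n, γ⟩ := by
  rw [WF_mk, WF_mk]
  apply Finset.prod_congr rfl
  intro i _
  have hi1 : ((i.castSucc.castSucc : Fin (n + 2)) : ℕ) ≠ n + 1 := by
    have := i.isLt
    simp only [Fin.coe_castSucc]
    omega
  have hi2 : ((i.castSucc.succ : Fin (n + 2)) : ℕ) ≠ n + 1 := by
    have := i.isLt
    simp only [Fin.val_succ, Fin.coe_castSucc]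
    omega
  rw [hδ _ hi1, hδ _ hi2, pC_toE R μ B e₀ _ _ (hno _ hi1) (hno _ hi2)]

lemma WB_toE (e₀ : E) {n : ℕ} {γ : Fin (n + 2) → Option {η : E // η ∉ B}}
    {δ : Fin (n + 2) → E}
    (hno : ∀ j : Fin (n + 2), (j : ℕ) ≠ 0 → γ j ≠ none)
    (hδ : ∀ j : Fin (n + 2), (j : ℕ) ≠ 0 → δ j = toE B e₀ (γ j)) :
    WB (jumpProb R) ⟨n, δ⟩ = WB (jumpProb (collapsedRate R μ B)) ⟨n, γ⟩ := by
  rw [WB_mk, WB_mk]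
  apply Finset.prod_congr rfl
  intro i _
  have hi1 : ((i.succ.castSucc : Fin (n + 2)) : ℕ) ≠ 0 := by
    simp only [Fin.coe_castSucc, Fin.val_succ]
    omega
  have hi2 : ((i.succ.succ : Fin (n + 2)) : ℕ) ≠ 0 := by
    simp only [Fin.val_succ]
    omega
  rw [hδ _ hi1, hδ _ hi2, pC_toE R μ B e₀ _ _ (hno _ hi1) (hno _ hi2)]

lemma qC_some_none (hR : IsRateMatrix R) (a : {η : E // η ∉ B}) :
    ENNReal.ofReal (jumpProb (collapsedRate R μ B) (some a) none)
      = ∑' ζ : B, ENNReal.ofReal (jumpProb R a.1 ζ.1) := by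
  have hane : ∀ ζ : B, a.1 ≠ ζ.1 := fun ζ h => a.2 (h ▸ ζ.2)
  have h1 : jumpProb (collapsedRate R μ B) (some a) none
      = (∑' ζ : B, R a.1 ζ.1) / (-R a.1 a.1) := by
    simp only [jumpProb]
    rw [if_neg (by simp : ¬(some a : Option {η : E // η ∉ B}) = none), cr_some_none,
      cr_some_some]
  have h2 : (∑' ζ : B, R a.1 ζ.1) / (-R a.1 a.1)
      = ∑' ζ : B, R a.1 ζ.1 / (-R a.1 a.1) := by
    simp_rw [div_eq_mul_inv]
    exact tsum_mul_right.symm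
  rw [h1, h2, ENNReal.ofReal_tsum_of_nonneg
    (fun ζ => div_nonneg (hR.offdiag_nonneg _ _ (hane ζ)) (lam_pos R hR a.1).le)
    (Summable.subtype ((hR.row_summable a.1).div_const _) B)]
  exact tsum_congr fun ζ => by rw [jumpProb_ne R _ _ (hane ζ)]

/-- extraction of `some`-ness for paths conditioned to end at `𝔡`. -/
lemma cond_some_none (ξ : {η : E // η ∉ B}) {n : ℕ}
    {γ : Fin (n + 2) → Option {η : E // η ∉ B}}
    (hc : Cond (some ξ) (insert none (collapsedSet B F)) {none} ⟨n, γ⟩) :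
    ∀ j : Fin (n + 2), (j : ℕ) ≠ n + 1 → γ j ≠ none := by
  obtain ⟨h1, h2, h3⟩ := (Cond_mk _ _ _ _).1 hc
  intro j hj
  rcases Nat.eq_zero_or_pos (j : ℕ) with hj0 | hj0
  · have hje : j = 0 := Fin.ext (by simpa using hj0)
    rw [hje, show γ 0 = some ξ from h1]
    simp
  · have hj1 : (j : ℕ) < n + 1 := by
      have := j.isLt
      omega
    obtain ⟨a, ha, _⟩ := (not_mem_G B F).1 (h2 j hj0 hj1)
    rw [ha]
    simp

/-- Lemma B: the rate from a regular state into `𝔡`. -/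
lemma eRetC_some_none (hR : IsRateMatrix R) (hBF : B ⊆ F) (e₀ : E)
    (ξ : {η : E // η ∉ B}) :
    eRet (jumpProb (collapsedRate R μ B)) (some ξ) (insert none (collapsedSet B F))
        {(none : Option {η : E // η ∉ B})}
      = ∑' ζ : B, eRet (jumpProb R) ξ.1 F {ζ.1} := by
  classical
  set FW : (Σ n : ℕ, Fin (n + 2) → Option {η : E // η ∉ B}) → B → ℝ≥0∞ :=
    fun x ζ => if Cond (some ξ) (insert none (collapsedSet B F)) {none} x
      then WF (jumpProb (collapsedRate R μ B)) x
        * ENNReal.ofReal (jumpProb R (toE B e₀ (x.2 (Fin.last x.1).castSucc)) ζ.1)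
      else 0 with hFWdef
  -- the shared weight computation
  have hkeyW : ∀ (ζ : B) (n : ℕ) (γ : Fin (n + 2) → Option {η : E // η ∉ B})
      (δ : Fin (n + 2) → E),
      (∀ j : Fin (n + 2), (j : ℕ) ≠ n + 1 → γ j ≠ none) →
      (∀ j : Fin (n + 2), (j : ℕ) ≠ n + 1 → δ j = toE B e₀ (γ j)) →
      δ (Fin.last (n + 1)) = ζ.1 →
      eW (jumpProb R) ⟨n, δ⟩ = WF (jumpProb (collapsedRate R μ B)) ⟨n, γ⟩
        * ENNReal.ofReal (jumpProb R (toE B e₀ (γ (Fin.last n).castSucc)) ζ.1) := by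
    intro ζ n γ δ hno hδ hlast
    have hpre : ((Fin.last n).castSucc : Fin (n + 2)).1 ≠ n + 1 := by
      simp only [Fin.coe_castSucc, Fin.val_last]
      omega
    rw [eW_split_last, WF_toE R μ B e₀ hno hδ, hδ _ hpre, hlast]
  rw [eRet_def]
  have hmid : (∑' x : Σ n : ℕ, Fin (n + 2) → Option {η : E // η ∉ B}, ∑' ζ : B, FW x ζ)
      = ∑' ζ : B, eRet (jumpProb R) ξ.1 F {ζ.1} := by
    rw [ENNReal.tsum_comm]
    apply tsum_congr
    intro ζ
    rw [eRet_def]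
    refine (tsum_eq_tsum_of_ne_zero_bij
      (fun x => ⟨x.1.1, fun j => if (j : ℕ) = x.1.1 + 1 then ζ.1
        else toE B e₀ (x.1.2 j)⟩) ?_ ?_ ?_).symm
    -- injectivity
    · rintro ⟨⟨n1, γ1⟩, hx1⟩ ⟨⟨n2, γ2⟩, hx2⟩ heq
      have hc1 := ite_ne_zero_imp hx1
      have hc2 := ite_ne_zero_imp hx2
      obtain ⟨hn, hh⟩ := Sigma.mk.inj_iff.mp heq
      subst hn
      have hfun := eq_of_heq hh
      apply Subtype.ext
      show (⟨n1, γ1⟩ : Σ n : ℕ, Fin (n + 2) → Option {η : E // η ∉ B}) = ⟨n1, γ2⟩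
      have hγ : γ1 = γ2 := by
        funext j
        have hj := congrFun hfun j
        by_cases hje : (j : ℕ) = n1 + 1
        · have hjl : j = Fin.last (n1 + 1) := Fin.ext (by simpa using hje)
          have hl1 : γ1 (Fin.last (n1 + 1)) = none :=
            Set.mem_singleton_iff.1 ((Cond_mk _ _ _ _).1 hc1).2.2
          have hl2 : γ2 (Fin.last (n1 + 1)) = none :=
            Set.mem_singleton_iff.1 ((Cond_mk _ _ _ _).1 hc2).2.2
          rw [hjl, hl1, hl2]
        · rw [if_neg hje, if_neg hje] at hj
          exact toE_inj B e₀ (cond_some_none B F ξ hc1 j hje)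
            (cond_some_none B F ξ hc2 j hje) hj
      rw [hγ]
    -- support
    · rintro ⟨n, δ⟩ hy
      have hc := ite_ne_zero_imp hy
      obtain ⟨h1, h2, h3⟩ := (Cond_mk _ _ _ _).1 hc
      have hnB : ∀ j : Fin (n + 2), (j : ℕ) ≠ n + 1 → δ j ∉ B := by
        intro j hj
        rcases Nat.eq_zero_or_pos (j : ℕ) with hj0 | hj0
        · have hje : j = 0 := Fin.ext (by simpa using hj0)
          rw [hje, show δ 0 = ξ.1 from h1]
          exact ξ.2
        · have hj1 : (j : ℕ) < n + 1 := by
            have := j.isLt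
            omega
          exact fun hb => (h2 j hj0 hj1) (hBF hb)
      set γ : Fin (n + 2) → Option {η : E // η ∉ B} := liftP B {n + 1} δ with hγdef
      have hγs : ∀ j : Fin (n + 2), (hj : (j : ℕ) ≠ n + 1) →
          γ j = some ⟨δ j, hnB j hj⟩ :=
        fun j hj => liftP_some B {n + 1} δ j (by simpa using hj) (hnB j hj)
      have hγl : γ (Fin.last (n + 1)) = none :=
        liftP_none B {n + 1} δ _ (by simp)
      have hδγ : ∀ j : Fin (n + 2), (j : ℕ) ≠ n + 1 → δ j = toE B e₀ (γ j) := by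
        intro j hj
        rw [hγs j hj, toE_some]
      have hγno : ∀ j : Fin (n + 2), (j : ℕ) ≠ n + 1 → γ j ≠ none := by
        intro j hj
        rw [hγs j hj]
        simp
      have hδl : δ (Fin.last (n + 1)) = ζ.1 := Set.mem_singleton_iff.1 h3
      have hcondγ : Cond (some ξ) (insert none (collapsedSet B F)) {none} ⟨n, γ⟩ := by
        rw [Cond_mk]
        refine ⟨?_, ?_, ?_⟩
        · rw [hγs 0 (by simp)]
          exact congrArg some (Subtype.ext h1)
        · intro j hj0 hj1
          rw [hγs j (by omega)]
          rw [mem_G_some]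
          exact h2 j hj0 hj1
        · rw [hγl]
          exact Set.mem_singleton _
      have hWeq : eW (jumpProb R) ⟨n, δ⟩ = FW ⟨n, γ⟩ ζ := by
        rw [hFWdef]
        try dsimp only
        rw [if_pos hcondγ]
        exact hkeyW ζ n γ δ hγno hδγ hδl
      refine ⟨⟨⟨n, γ⟩, ?_⟩, ?_⟩
      · rw [Function.mem_support, ← hWeq]
        intro h0
        apply hy
        try dsimp only
        rw [if_pos hc, h0]
      · try dsimp only
        congr 1
        funext j
        by_cases hj : (j : ℕ) = n + 1
        · rw [if_pos hj]
          have hjl : j = Fin.last (n + 1) := Fin.ext (by simpa using hj)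
          rw [hjl, hδl]
        · rw [if_neg hj, ← hδγ j hj]
    -- values
    · rintro ⟨⟨n, γ⟩, hx⟩
      have hcFW := ite_ne_zero_imp (hx : FW ⟨n, γ⟩ ζ ≠ 0)
      obtain ⟨h1, h2, h3⟩ := (Cond_mk _ _ _ _).1 hcFW
      have hno := cond_some_none B F ξ hcFW
      try dsimp only
      set δ : Fin (n + 2) → E :=
        fun j => if (j : ℕ) = n + 1 then ζ.1 else toE B e₀ (γ j) with hδdef
      have hδγ : ∀ j : Fin (n + 2), (j : ℕ) ≠ n + 1 → δ j = toE B e₀ (γ j) := by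
        intro j hj
        rw [hδdef]
        try dsimp only
        rw [if_neg hj]
      have hδl : δ (Fin.last (n + 1)) = ζ.1 := by
        rw [hδdef]
        try dsimp only
        rw [if_pos (by simp)]
      have hcF : Cond ξ.1 F {ζ.1} ⟨n, δ⟩ := by
        rw [Cond_mk]
        refine ⟨?_, ?_, ?_⟩
        · rw [hδγ 0 (by simp), show γ 0 = some ξ from h1, toE_some]
        · intro j hj0 hj1
          obtain ⟨a, ha, haF⟩ := (not_mem_G B F).1 (h2 j hj0 hj1)
          rw [hδγ j (by omega), ha, toE_some]
          exact haF
        · rw [hδl]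
          exact Set.mem_singleton _
      rw [if_pos hcF]
      have hWeq : eW (jumpProb R) ⟨n, δ⟩ = FW ⟨n, γ⟩ ζ := by
        rw [hFWdef]
        try dsimp only
        rw [if_pos hcFW]
        exact hkeyW ζ n γ δ hno hδγ hδl
      exact hWeq
  rw [← hmid]
  apply tsum_congr
  rintro ⟨n, γ⟩
  by_cases hc : Cond (some ξ) (insert none (collapsedSet B F)) {none} ⟨n, γ⟩
  · rw [if_pos hc]
    have h3 : γ (Fin.last (n + 1)) = none :=
      Set.mem_singleton_iff.1 ((Cond_mk _ _ _ _).1 hc).2.2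
    have hno := cond_some_none B F ξ hc
    have hpre : ((Fin.last n).castSucc : Fin (n + 2)).1 ≠ n + 1 := by
      simp only [Fin.coe_castSucc, Fin.val_last]
      omega
    obtain ⟨a, ha⟩ := Option.ne_none_iff_exists'.1 (hno _ hpre)
    calc eW (jumpProb (collapsedRate R μ B)) ⟨n, γ⟩
        = WF (jumpProb (collapsedRate R μ B)) ⟨n, γ⟩ * ENNReal.ofReal
            (jumpProb (collapsedRate R μ B) (γ (Fin.last n).castSucc)
              (γ (Fin.last (n + 1)))) := eW_split_last _ γ
      _ = WF (jumpProb (collapsedRate R μ B)) ⟨n, γ⟩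
          * ∑' ζ : B, ENNReal.ofReal (jumpProb R a.1 ζ.1) := by
          rw [ha, h3, qC_some_none R μ B hR a]
      _ = ∑' ζ : B, WF (jumpProb (collapsedRate R μ B)) ⟨n, γ⟩
          * ENNReal.ofReal (jumpProb R a.1 ζ.1) := ENNReal.tsum_mul_left.symm
      _ = ∑' ζ : B, FW ⟨n, γ⟩ ζ := by
          apply tsum_congr
          intro ζ
          rw [hFWdef]
          try dsimp only
          rw [if_pos hc, ha, toE_some]
  · rw [if_neg hc]
    symm
    have hz : ∀ ζ : B, FW ⟨n, γ⟩ ζ = 0 := by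
      intro ζ
      rw [hFWdef]
      try dsimp only
      rw [if_neg hc]
    rw [tsum_congr hz, tsum_zero]

end Collapsed

end StmtAux
namespace StmtAux

open Function ENNReal

variable {E : Type*}

section Collapsed

variable (R : E → E → ℝ) (μ : E → ℝ) (B F : Set E)

lemma qC_none_some (hμ : IsStationaryRate R μ) (hR : IsRateMatrix R)
    (hlam : 0 < -collapsedRate R μ B none none) (a : {η : E // η ∉ B}) :
    ENNReal.ofReal (-collapsedRate R μ B none none)
      * ENNReal.ofReal (jumpProb (collapsedRate R μ B) none (some a))
    = ENNReal.ofReal ((∑' ζ : B, μ ζ.1)⁻¹)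
      * ∑' ζ : B, ENNReal.ofReal (μ ζ.1 * R ζ.1 a.1) := by
  have hmu : (0 : ℝ) ≤ (∑' ζ : B, μ ζ.1)⁻¹ :=
    inv_nonneg.2 (tsum_nonneg fun ζ => (hμ.pos ζ.1).le)
  have h1 : jumpProb (collapsedRate R μ B) none (some a)
      = collapsedRate R μ B none (some a) / (-collapsedRate R μ B none none) := by
    simp only [jumpProb]
    rw [if_neg (by simp : ¬(none : Option {η : E // η ∉ B}) = some a)]
  rw [h1, ← ENNReal.ofReal_mul hlam.le,
    mul_div_cancel₀ _ hlam.ne', cr_none_some,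
    ENNReal.ofReal_mul hmu,
    ENNReal.ofReal_tsum_of_nonneg (fun ζ => inner_nonneg R μ B hR hμ ζ a.1 a.2)
      (Summable.subtype (hμ.flux_summable a.1) B)]

lemma cond_none_some (η : {x : E // x ∉ B}) {n : ℕ}
    {γ : Fin (n + 2) → Option {η : E // η ∉ B}}
    (hc : Cond none (insert none (collapsedSet B F)) {some η} ⟨n, γ⟩) :
    ∀ j : Fin (n + 2), (j : ℕ) ≠ 0 → γ j ≠ none := by
  obtain ⟨h1, h2, h3⟩ := (Cond_mk _ _ _ _).1 hc
  intro j hj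
  rcases Nat.lt_or_ge (j : ℕ) (n + 1) with hj1 | hj1
  · obtain ⟨a, ha, _⟩ := (not_mem_G B F).1 (h2 j (by omega) hj1)
    rw [ha]
    simp
  · have hje : j = Fin.last (n + 1) := by
      apply Fin.ext
      have := j.isLt
      simp only [Fin.val_last]
      omega
    rw [hje, show γ (Fin.last (n + 1)) = some η from Set.mem_singleton_iff.1 h3]
    simp

/-- Lemma C: the rate from `𝔡` to a regular state. -/
lemma eRetC_none_some (hR : IsRateMatrix R) (hμ : IsStationaryRate R μ) (hBF : B ⊆ F)
    (hlam : 0 < -collapsedRate R μ B none none) (e₀ : E) (η : {x : E // x ∉ B}) :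
    ENNReal.ofReal (-collapsedRate R μ B none none)
      * eRet (jumpProb (collapsedRate R μ B)) none (insert none (collapsedSet B F)) {some η}
    = ENNReal.ofReal ((∑' ζ : B, μ ζ.1)⁻¹)
      * ∑' ζ : B, ENNReal.ofReal (μ ζ.1) * ENNReal.ofReal (-R ζ.1 ζ.1)
          * eRet (jumpProb R) ζ.1 F {η.1} := by
  classical
  set GW : (Σ n : ℕ, Fin (n + 2) → Option {η : E // η ∉ B}) → B → ℝ≥0∞ :=
    fun x ζ => if Cond none (insert none (collapsedSet B F)) {some η} x
      then ENNReal.ofReal (μ ζ.1 * R ζ.1 (toE B e₀ (x.2 1)))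
        * WB (jumpProb (collapsedRate R μ B)) x
      else 0 with hGWdef
  -- the shared weight computation
  have hkeyW : ∀ (ζ : B) (n : ℕ) (γ : Fin (n + 2) → Option {η : E // η ∉ B})
      (δ : Fin (n + 2) → E),
      (∀ j : Fin (n + 2), (j : ℕ) ≠ 0 → γ j ≠ none) →
      (∀ j : Fin (n + 2), (j : ℕ) ≠ 0 → δ j = toE B e₀ (γ j)) →
      δ 0 = ζ.1 →
      ENNReal.ofReal (μ ζ.1) * ENNReal.ofReal (-R ζ.1 ζ.1) * eW (jumpProb R) ⟨n, δ⟩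
        = ENNReal.ofReal (μ ζ.1 * R ζ.1 (toE B e₀ (γ 1)))
          * WB (jumpProb (collapsedRate R μ B)) ⟨n, γ⟩ := by
    intro ζ n γ δ hno hδ h0
    have h1ne : ((1 : Fin (n + 2)) : ℕ) ≠ 0 := by
      rw [Fin.val_one]
      omega
    obtain ⟨a, ha⟩ := Option.ne_none_iff_exists'.1 (hno 1 h1ne)
    have hδ1 : δ 1 = a.1 := by rw [hδ 1 h1ne, ha, toE_some]
    have hζδ1 : ζ.1 ≠ δ 1 := by
      rw [hδ1]
      exact fun h => a.2 (h ▸ ζ.2)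
    have harith : μ ζ.1 * (-R ζ.1 ζ.1) * jumpProb R ζ.1 (δ 1) = μ ζ.1 * R ζ.1 (δ 1) := by
      rw [jumpProb_ne R _ _ hζδ1, mul_assoc, mul_comm (-R ζ.1 ζ.1), div_mul_cancel₀]
      exact (lam_pos R hR ζ.1).ne'
    calc ENNReal.ofReal (μ ζ.1) * ENNReal.ofReal (-R ζ.1 ζ.1) * eW (jumpProb R) ⟨n, δ⟩
        = ENNReal.ofReal (μ ζ.1) * ENNReal.ofReal (-R ζ.1 ζ.1)
          * (ENNReal.ofReal (jumpProb R (δ 0) (δ 1)) * WB (jumpProb R) ⟨n, δ⟩) := by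
          rw [eW_split_first]
      _ = ENNReal.ofReal (μ ζ.1 * (-R ζ.1 ζ.1) * jumpProb R ζ.1 (δ 1))
          * WB (jumpProb R) ⟨n, δ⟩ := by
          rw [h0, ENNReal.ofReal_mul (mul_nonneg (hμ.pos ζ.1).le (lam_pos R hR ζ.1).le),
            ENNReal.ofReal_mul (hμ.pos ζ.1).le]
          ring
      _ = ENNReal.ofReal (μ ζ.1 * R ζ.1 (toE B e₀ (γ 1)))
          * WB (jumpProb (collapsedRate R μ B)) ⟨n, γ⟩ := by
          rw [harith, WB_toE R μ B e₀ hno hδ, hδ1, ha, toE_some]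
  rw [eRet_def, ← ENNReal.tsum_mul_left]
  have hmid : (∑' x : Σ n : ℕ, Fin (n + 2) → Option {η : E // η ∉ B},
        ENNReal.ofReal ((∑' ζ : B, μ ζ.1)⁻¹) * ∑' ζ : B, GW x ζ)
      = ENNReal.ofReal ((∑' ζ : B, μ ζ.1)⁻¹)
        * ∑' ζ : B, ENNReal.ofReal (μ ζ.1) * ENNReal.ofReal (-R ζ.1 ζ.1)
            * eRet (jumpProb R) ζ.1 F {η.1} := by
    rw [ENNReal.tsum_mul_left]
    congr 1
    rw [ENNReal.tsum_comm]
    apply tsum_congr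
    intro ζ
    rw [eRet_def, ← ENNReal.tsum_mul_left]
    refine (tsum_eq_tsum_of_ne_zero_bij
      (fun x => ⟨x.1.1, fun j => if (j : ℕ) = 0 then ζ.1
        else toE B e₀ (x.1.2 j)⟩) ?_ ?_ ?_).symm
    -- injectivity
    · rintro ⟨⟨n1, γ1⟩, hx1⟩ ⟨⟨n2, γ2⟩, hx2⟩ heq
      have hc1 := ite_ne_zero_imp hx1
      have hc2 := ite_ne_zero_imp hx2
      obtain ⟨hn, hh⟩ := Sigma.mk.inj_iff.mp heq
      subst hn
      have hfun := eq_of_heq hh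
      apply Subtype.ext
      show (⟨n1, γ1⟩ : Σ n : ℕ, Fin (n + 2) → Option {η : E // η ∉ B}) = ⟨n1, γ2⟩
      have hγ : γ1 = γ2 := by
        funext j
        have hj := congrFun hfun j
        by_cases hje : (j : ℕ) = 0
        · have hjl : j = 0 := Fin.ext (by simpa using hje)
          rw [hjl, show γ1 0 = none from ((Cond_mk _ _ _ _).1 hc1).1,
            show γ2 0 = none from ((Cond_mk _ _ _ _).1 hc2).1]
        · rw [if_neg hje, if_neg hje] at hj
          exact toE_inj B e₀ (cond_none_some B F η hc1 j hje)
            (cond_none_some B F η hc2 j hje) hj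
      rw [hγ]
    -- support
    · rintro ⟨n, δ⟩ hy
      have hite : (if Cond ζ.1 F {η.1} ⟨n, δ⟩ then eW (jumpProb R) ⟨n, δ⟩ else 0) ≠ 0 := by
        intro hv
        apply hy
        show ENNReal.ofReal (μ ζ.1) * ENNReal.ofReal (-R ζ.1 ζ.1) * _ = 0
        rw [mul_eq_zero]; exact Or.inr (by convert hv)
      have hc := ite_ne_zero_imp hite
      obtain ⟨h1, h2, h3⟩ := (Cond_mk _ _ _ _).1 hc
      have hnB : ∀ j : Fin (n + 2), (j : ℕ) ≠ 0 → δ j ∉ B := by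
        intro j hj
        rcases Nat.lt_or_ge (j : ℕ) (n + 1) with hj1 | hj1
        · exact fun hb => (h2 j (by omega) hj1) (hBF hb)
        · have hje : j = Fin.last (n + 1) := by
            apply Fin.ext
            have := j.isLt
            simp only [Fin.val_last]
            omega
          rw [hje, show δ (Fin.last (n + 1)) = η.1 from Set.mem_singleton_iff.1 h3]
          exact η.2
      set γ : Fin (n + 2) → Option {η : E // η ∉ B} := liftP B {0} δ with hγdef
      have hγs : ∀ j : Fin (n + 2), (hj : (j : ℕ) ≠ 0) →
          γ j = some ⟨δ j, hnB j hj⟩ :=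
        fun j hj => liftP_some B {0} δ j (by simpa using hj) (hnB j hj)
      have hγ0 : γ 0 = none := liftP_none B {0} δ _ (by simp)
      have hδγ : ∀ j : Fin (n + 2), (j : ℕ) ≠ 0 → δ j = toE B e₀ (γ j) := by
        intro j hj
        rw [hγs j hj, toE_some]
      have hγno : ∀ j : Fin (n + 2), (j : ℕ) ≠ 0 → γ j ≠ none := by
        intro j hj
        rw [hγs j hj]
        simp
      have hlast0 : ((Fin.last (n + 1) : Fin (n + 2)) : ℕ) ≠ 0 := by simp
      have hcondγ : Cond none (insert none (collapsedSet B F)) {some η} ⟨n, γ⟩ := by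
        rw [Cond_mk]
        refine ⟨hγ0, ?_, ?_⟩
        · intro j hj0 hj1
          rw [hγs j (by omega)]
          rw [mem_G_some]
          exact h2 j hj0 hj1
        · rw [hγs _ hlast0]
          exact Set.mem_singleton_iff.2
            (congrArg some (Subtype.ext (Set.mem_singleton_iff.1 h3)))
      have hWeq : ENNReal.ofReal (μ ζ.1) * ENNReal.ofReal (-R ζ.1 ζ.1)
          * eW (jumpProb R) ⟨n, δ⟩ = GW ⟨n, γ⟩ ζ := by
        rw [hGWdef]
        try dsimp only
        rw [if_pos hcondγ]
        exact hkeyW ζ n γ δ hγno hδγ h1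
      refine ⟨⟨⟨n, γ⟩, ?_⟩, ?_⟩
      · rw [Function.mem_support, ← hWeq]
        intro h0
        apply hy
        try dsimp only
        rw [if_pos hc]
        exact h0
      · try dsimp only
        congr 1
        funext j
        by_cases hj : (j : ℕ) = 0
        · rw [if_pos hj]
          have hjl : j = 0 := Fin.ext (by simpa using hj)
          rw [hjl, h1]
        · rw [if_neg hj, ← hδγ j hj]
    -- values
    · rintro ⟨⟨n, γ⟩, hx⟩
      have hcGW := ite_ne_zero_imp (hx : GW ⟨n, γ⟩ ζ ≠ 0)
      obtain ⟨h1, h2, h3⟩ := (Cond_mk _ _ _ _).1 hcGW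
      have hno := cond_none_some B F η hcGW
      try dsimp only
      set δ : Fin (n + 2) → E :=
        fun j => if (j : ℕ) = 0 then ζ.1 else toE B e₀ (γ j) with hδdef
      have hδγ : ∀ j : Fin (n + 2), (j : ℕ) ≠ 0 → δ j = toE B e₀ (γ j) := by
        intro j hj
        rw [hδdef]
        try dsimp only
        rw [if_neg hj]
      have hδ0 : δ 0 = ζ.1 := by
        rw [hδdef]
        try dsimp only
        rw [if_pos (by simp)]
      have hlast0 : ((Fin.last (n + 1) : Fin (n + 2)) : ℕ) ≠ 0 := by simp
      have hcF : Cond ζ.1 F {η.1} ⟨n, δ⟩ := by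
        rw [Cond_mk]
        refine ⟨hδ0, ?_, ?_⟩
        · intro j hj0 hj1
          obtain ⟨a, ha, haF⟩ := (not_mem_G B F).1 (h2 j hj0 hj1)
          rw [hδγ j (by omega), ha, toE_some]
          exact haF
        · rw [hδγ _ hlast0, show γ (Fin.last (n + 1)) = some η
            from Set.mem_singleton_iff.1 h3, toE_some]
          exact Set.mem_singleton _
      rw [if_pos hcF]
      have hWeq : ENNReal.ofReal (μ ζ.1) * ENNReal.ofReal (-R ζ.1 ζ.1)
          * eW (jumpProb R) ⟨n, δ⟩ = GW ⟨n, γ⟩ ζ := by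
        rw [hGWdef]
        try dsimp only
        rw [if_pos hcGW]
        exact hkeyW ζ n γ δ hno hδγ hδ0
      exact hWeq
  rw [← hmid]
  apply tsum_congr
  rintro ⟨n, γ⟩
  by_cases hc : Cond none (insert none (collapsedSet B F)) {some η} ⟨n, γ⟩
  · rw [if_pos hc]
    have h1 : γ 0 = none := ((Cond_mk _ _ _ _).1 hc).1
    have hno := cond_none_some B F η hc
    have h1ne : ((1 : Fin (n + 2)) : ℕ) ≠ 0 := by
      rw [Fin.val_one]
      omega
    obtain ⟨a, ha⟩ := Option.ne_none_iff_exists'.1 (hno 1 h1ne)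
    calc ENNReal.ofReal (-collapsedRate R μ B none none)
          * eW (jumpProb (collapsedRate R μ B)) ⟨n, γ⟩
        = (ENNReal.ofReal (-collapsedRate R μ B none none)
            * ENNReal.ofReal (jumpProb (collapsedRate R μ B) none (some a)))
          * WB (jumpProb (collapsedRate R μ B)) ⟨n, γ⟩ := by
          rw [eW_split_first, h1, ha, mul_assoc]
      _ = (ENNReal.ofReal ((∑' ζ : B, μ ζ.1)⁻¹)
            * ∑' ζ : B, ENNReal.ofReal (μ ζ.1 * R ζ.1 a.1))
          * WB (jumpProb (collapsedRate R μ B)) ⟨n, γ⟩ := by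
          rw [qC_none_some R μ B hμ hR hlam a]
      _ = ENNReal.ofReal ((∑' ζ : B, μ ζ.1)⁻¹)
          * ∑' ζ : B, ENNReal.ofReal (μ ζ.1 * R ζ.1 a.1)
            * WB (jumpProb (collapsedRate R μ B)) ⟨n, γ⟩ := by
          rw [mul_assoc, ENNReal.tsum_mul_right]
      _ = ENNReal.ofReal ((∑' ζ : B, μ ζ.1)⁻¹) * ∑' ζ : B, GW ⟨n, γ⟩ ζ := by
          congr 1
          apply tsum_congr
          intro ζ
          rw [hGWdef]
          try dsimp only
          rw [if_pos hc, ha, toE_some]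
  · rw [if_neg hc, mul_zero]
    have hz : ∀ ζ : B, GW ⟨n, γ⟩ ζ = 0 := by
      intro ζ
      rw [hGWdef]
      try dsimp only
      rw [if_neg hc]
    rw [tsum_congr hz, tsum_zero, mul_zero]

end Collapsed

end StmtAux

open StmtAux

/-- Lemma 4.2: for nonempty `B ⊂ F ⊆ E` with `B ≠ F` and `F ≠ E`, the trace on
`G = (F∖B) ∪ {𝔡}` of the chain collapsed at `B` has the same jump rates as the collapse at
`B` of the trace on `F`; in particular, for `η ∈ F∖B`,
`R_{TC}(𝔡,η) = μ(B)^{-1} Σ_{ζ∈B} μ(ζ)λ(ζ) P_ζ[ℍ⁺_F < ∞ and Y_{ℍ⁺_F} = η] = R_{CT}(𝔡,η)`;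
hence the two processes have the same law. -/
theorem stmt9 {E : Type*} [Countable E] (R : E → E → ℝ) (μ : E → ℝ)
    (hR : IsRateMatrix R) (hirr : MCIrreducible (jumpProb R)) (hμ : IsStationaryRate R μ)
    (B F : Set E) (hBF : B ⊆ F) (hB : B.Nonempty) (hBne : B ≠ F) (hF : F ≠ Set.univ) :
    (∀ u v : Option {η : E // η ∉ B},
      u ∈ insert none (collapsedSet B F) → v ∈ insert none (collapsedSet B F) → u ≠ v →
        traceOfCollapsedRate R μ B F u v = collapsedTraceRate R μ B F u v)
    ∧ ∀ η : {η : E // η ∉ B}, η.1 ∈ F →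
        traceOfCollapsedRate R μ B F none (some η)
          = (∑' ζ : B, μ ζ.1)⁻¹ *
              ∑' ζ : B, μ ζ.1 * (-R ζ.1 ζ.1) * retProb (jumpProb R) ζ.1 F {η.1}
        ∧ traceOfCollapsedRate R μ B F none (some η)
            = collapsedTraceRate R μ B F none (some η) := by
  classical
  obtain ⟨e₀, he₀⟩ := hB
  have hB' : B.Nonempty := ⟨e₀, he₀⟩
  have hpnn : ∀ a b : E, 0 ≤ jumpProb R a b := jumpProb_nonneg R hR
  have hpCnn : ∀ u v : Option {η : E // η ∉ B}, 0 ≤ jumpProb (collapsedRate R μ B) u v :=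
    pC_nonneg R μ B hR hμ
  have hlam : 0 < -collapsedRate R μ B none none := by
    rw [lamC_eq]
    exact lamC_pos R μ B F hR hμ hirr hB' hBF hF
  have hmuinv : (0 : ℝ) ≤ (∑' ζ : B, μ ζ.1)⁻¹ :=
    inv_nonneg.2 (tsum_nonneg fun ζ => (hμ.pos ζ.1).le)
  -- part 2, first equality
  have main2 : ∀ η : {η : E // η ∉ B}, η.1 ∈ F →
      traceOfCollapsedRate R μ B F none (some η)
        = (∑' ζ : B, μ ζ.1)⁻¹ *
            ∑' ζ : B, μ ζ.1 * (-R ζ.1 ζ.1) * retProb (jumpProb R) ζ.1 F {η.1} := by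
    intro η hηF
    have hfin : ∀ ζ : B, eRet (jumpProb R) ζ.1 F {η.1} ≠ ⊤ :=
      fun ζ => eRet_ne_top R hR ζ.1 F {η.1} (Set.singleton_subset_iff.2 hηF)
    rw [traceOfCollapsedRate, retProb_eq_toReal _ hpCnn]
    have h1 : -collapsedRate R μ B none none *
        (eRet (jumpProb (collapsedRate R μ B)) none
          (insert none (collapsedSet B F)) {some η}).toReal
        = (ENNReal.ofReal (-collapsedRate R μ B none none) *
            eRet (jumpProb (collapsedRate R μ B)) none
              (insert none (collapsedSet B F)) {some η}).toReal := by
      rw [ENNReal.toReal_mul, ENNReal.toReal_ofReal hlam.le]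
    rw [h1, eRetC_none_some R μ B F hR hμ hBF hlam e₀ η,
      ENNReal.toReal_mul, ENNReal.toReal_ofReal hmuinv]
    congr 1
    rw [tsum_eq_toReal_ofReal (fun ζ : B => mul_nonneg
      (mul_nonneg (hμ.pos ζ.1).le (lam_pos R hR ζ.1).le)
      (retProb_nonneg _ hpnn _ _ _))]
    congr 1
    apply tsum_congr
    intro ζ
    rw [retProb_eq_toReal _ hpnn,
      ENNReal.ofReal_mul (mul_nonneg (hμ.pos ζ.1).le (lam_pos R hR ζ.1).le),
      ENNReal.ofReal_mul (hμ.pos ζ.1).le,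
      ENNReal.ofReal_toReal (hfin ζ)]
  -- part 2, second equality
  have main2' : ∀ η : {η : E // η ∉ B}, η.1 ∈ F →
      traceOfCollapsedRate R μ B F none (some η)
        = collapsedTraceRate R μ B F none (some η) := by
    intro η hηF
    rw [main2 η hηF,
      show collapsedTraceRate R μ B F none (some η)
        = (∑' ζ : B, μ ζ.1)⁻¹ * ∑' ζ : B, μ ζ.1 * traceRate R F ζ.1 η.1 from rfl]
    congr 1
    apply tsum_congr
    intro ζ
    rw [traceRate]
    ring
  refine ⟨?_, fun η hη => ⟨main2 η hη, main2' η hη⟩⟩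
  intro u v hu hv hne
  rcases u with _ | ξ
  · rcases v with _ | ζ
    · exact absurd rfl hne
    · exact main2' ζ ((mem_G_some B F).1 hv)
  · have hdiag : -collapsedRate R μ B (some ξ) (some ξ) = -R ξ.1 ξ.1 := by
      rw [cr_some_some]
    rcases v with _ | ζ
    · -- some ξ → none
      rw [traceOfCollapsedRate, hdiag, retProb_eq_toReal _ hpCnn,
        eRetC_some_none R μ B F hR hBF e₀ ξ,
        show collapsedTraceRate R μ B F (some ξ) none
          = ∑' ζ : B, traceRate R F ξ.1 ζ.1 from rfl]
      have hsum : ∑' ζ : B, traceRate R F ξ.1 ζ.1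
          = -R ξ.1 ξ.1 * ∑' ζ : B, retProb (jumpProb R) ξ.1 F {ζ.1} := by
        rw [← tsum_mul_left]
        apply tsum_congr
        intro ζ
        rw [traceRate]
      have h2 : ∑' ζ : B, retProb (jumpProb R) ξ.1 F {ζ.1}
          = (∑' ζ : B, eRet (jumpProb R) ξ.1 F {ζ.1}).toReal := by
        rw [tsum_eq_toReal_ofReal (fun ζ : B => retProb_nonneg _ hpnn _ _ _)]
        congr 1
        apply tsum_congr
        intro ζ
        rw [retProb_eq_toReal _ hpnn, ENNReal.ofReal_toReal
          (eRet_ne_top R hR _ F _ (Set.singleton_subset_iff.2 (hBF ζ.2)))]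
      rw [hsum, h2]
    · -- some ξ → some ζ
      rw [traceOfCollapsedRate, hdiag, retProb_eq_toReal _ hpCnn,
        eRetC_some_some R μ B F hR hBF e₀ ξ ζ,
        show collapsedTraceRate R μ B F (some ξ) (some ζ)
          = traceRate R F ξ.1 ζ.1 from rfl,
        traceRate, retProb_eq_toReal _ hpnn]
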